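/- In rFPA(alpha) with alpha > 1 and two bidders, consider an undominated bid profile. If bidder i wins query j with probability 1 and the other bidder ibar satisfies V_{ibar} < B_{ibar}, then b_{i,j} ≥ alpha · v_{ibar,j}. -/

import Mathlib

open Finset
open scoped Classical

noncomputable section

/-- An allocation: each entry in `[0,1]`, and each query allocated total probability at most 1. -/
def IsAlloc {n q : ℕ} (π : Fin n → Fin q → ℝ) : Prop :=
  (∀ i j, 0 ≤ π i j) ∧ (∀ i j, π i j ≤ 1) ∧ ∀ j, ∑ i, π i j ≤ 1

/-- An integral (deterministic) allocation. -/
def IsIntegralAlloc {n q : ℕ} (π : Fin n → Fin q → ℝ) : Prop :=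
  IsAlloc π ∧ ∀ i j, π i j = 0 ∨ π i j = 1

/-- Liquid welfare of an allocation. -/
def allocLW {n q : ℕ} (B : Fin n → ℝ) (v π : Fin n → Fin q → ℝ) : ℝ :=
  ∑ i, min (B i) (∑ j, π i j * v i j)

/-- Winning probability of a bidder bidding `bi` against an opponent bidding `bo`
in the randomized first-price auction with parameter `α`. -/
def rfpaProb (α bi bo : ℝ) : ℝ :=
  if bi = 0 ∧ bo = 0 then 0
  else if α * bo ≤ bi then 1
  else if α * bi ≤ bo then 0
  else (1 / 2) * (1 + Real.log (bi / bo) / Real.log α)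

/-- Probability that bidder `i` wins query `j` in rFPA(α) with two bidders. -/
def rfpaPi {q : ℕ} (α : ℝ) (b : Fin 2 → Fin q → ℝ) (i : Fin 2) (j : Fin q) : ℝ :=
  rfpaProb α (b i j) (b (i + 1) j)

/-- Expected value of bidder `i` in rFPA(α). -/
def rfpaV {q : ℕ} (α : ℝ) (v b : Fin 2 → Fin q → ℝ) (i : Fin 2) : ℝ :=
  ∑ j, rfpaPi α b i j * v i j

/-- Expected spend of bidder `i` in rFPA(α). -/
def rfpaSpendI {q : ℕ} (α : ℝ) (b : Fin 2 → Fin q → ℝ) (i : Fin 2) : ℝ :=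
  ∑ j, rfpaPi α b i j * b i j

/-- Liquid welfare of a bid profile in rFPA(α). -/
def rfpaLW {q : ℕ} (α : ℝ) (B : Fin 2 → ℝ) (v b : Fin 2 → Fin q → ℝ) : ℝ :=
  ∑ i, min (B i) (rfpaV α v b i)

/-- Undominated (equilibrium) bid profile for rFPA(α) with ROS and budget constraints. -/
def IsRfpaEq {q : ℕ} (α : ℝ) (B : Fin 2 → ℝ) (v b : Fin 2 → Fin q → ℝ) : Prop :=
  (∀ i j, 0 ≤ b i j) ∧
  (∀ i, rfpaSpendI α b i ≤ min (B i) (rfpaV α v b i)) ∧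
  (∀ i (b' : Fin q → ℝ), (∀ j, 0 ≤ b' j) →
    rfpaV α v (Function.update b i b') i ≤ rfpaV α v b i ∨
    min (B i) (rfpaV α v (Function.update b i b') i)
      < rfpaSpendI α (Function.update b i b') i)

set_option maxHeartbeats 2000000 in
/-- in rFPA(α) with `α > 1` and two bidders, in every undominated bid profile,
if bidder `i` wins query `j` with probability 1 and the other bidder `i+1` has `V < B`,
then `b i j ≥ α * v (i+1) j`. -/
theorem stmt14 (q : ℕ) (α : ℝ) (hα : 1 < α) (B : Fin 2 → ℝ) (v b : Fin 2 → Fin q → ℝ)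
    (hB : ∀ i, 0 < B i) (hv : ∀ i j, 0 ≤ v i j)
    (hb : IsRfpaEq α B v b) (i : Fin 2) (j : Fin q)
    (hwin : rfpaPi α b i j = 1) (hV : rfpaV α v b (i + 1) < B (i + 1)) :
    α * v (i + 1) j ≤ b i j := by
  by_contra hcon
  push_neg at hcon
  obtain ⟨hbnn, hspend, hdev⟩ := hb
  have hα0 : (0:ℝ) < α := by linarith
  have hL : 0 < Real.log α := Real.log_pos hα
  have hii : i + 1 + 1 = i := by fin_cases i <;> rfl
  have hne : i ≠ i + 1 := by fin_cases i <;> decide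
  set c := b i j with hc
  set d := b (i + 1) j with hd
  set w := v (i + 1) j with hw
  -- From hwin : rfpaProb α c d = 1, extract α * d ≤ c and 0 < c
  have hwin' : α * d ≤ c ∧ 0 < c := by
    have h1 : rfpaProb α c d = 1 := hwin
    unfold rfpaProb at h1
    split_ifs at h1 with h2 h3 h4
    · exact absurd h1 (by norm_num)
    · constructor
      · exact h3
      · rcases lt_or_eq_of_le (hbnn i j) with h | h
        · exact h
        · exfalso
          have hd0 : d = 0 := by nlinarith [hbnn (i+1) j]
          exact h2 ⟨h.symm, hd0⟩
    · exact absurd h1 (by norm_num)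
    · exfalso
      push_neg at h3 h4
      have hdpos : 0 < d := by
        by_contra hcontra
        push_neg at hcontra
        nlinarith [hbnn i j, mul_le_mul_of_nonneg_left hcontra (le_of_lt hα0)]
      have hcpos : 0 < c := by nlinarith [hbnn i j]
      have hlog : Real.log (c / d) = Real.log α := by
        field_simp at h1
        linarith
      have : c / d = α := by
        have := Real.exp_log (show (0:ℝ) < c / d from div_pos hcpos hdpos)
        rw [hlog, Real.exp_log hα0] at this
        exact this.symm
      have : c = α * d := by field_simp at this; linarith
      linarith
  obtain ⟨hdc, hcpos⟩ := hwin'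
  have hdnn : 0 ≤ d := hbnn (i+1) j
  -- opponent's current winning probability at j is 0
  have hzero : rfpaPi α b (i + 1) j = 0 := by
    show rfpaProb α (b (i+1) j) (b (i+1+1) j) = 0
    rw [hii]
    unfold rfpaProb
    rw [if_neg, if_neg, if_pos hdc]
    · rintro hac
      nlinarith
    · rintro ⟨h1, h2⟩
      exact absurd h2 (by positivity)
  have hwpos : 0 < w := by nlinarith
  set ε := B (i+1) - rfpaV α v b (i+1) with hε
  have hεpos : 0 < ε := by simp [hε]; linarith
  set δ := min (α * w / c - 1) (min (α - 1) (2 * ε * Real.log α / c)) with hδ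
  have hδpos : 0 < δ := by
    apply lt_min
    · rw [lt_sub_iff_add_lt]
      rw [lt_div_iff₀ hcpos]
      nlinarith
    · apply lt_min
      · linarith
      · positivity
  have hδ1 : δ ≤ α * w / c - 1 := min_le_left _ _
  have hδ2 : δ ≤ α - 1 := le_trans (min_le_right _ _) (min_le_left _ _)
  have hδ3 : δ ≤ 2 * ε * Real.log α / c := le_trans (min_le_right _ _) (min_le_right _ _)
  set x := c * (1 + δ) / α with hx
  have hxpos : 0 < x := by positivity
  have hxw : x ≤ w := by
    rw [hx, div_le_iff₀ hα0]
    have : (1 + δ) ≤ α * w / c := by linarith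
    rw [le_div_iff₀ hcpos] at this
    nlinarith
  have hxc : x ≤ c := by
    rw [hx, div_le_iff₀ hα0]
    nlinarith
  have hcx : c < α * x := by
    rw [hx]
    field_simp
    nlinarith
  set p0 := rfpaProb α x c with hp0
  have hl1δ : 0 < Real.log (1 + δ) := Real.log_pos (by linarith)
  have hp0val : p0 = Real.log (1 + δ) / (2 * Real.log α) := by
    rw [hp0]
    unfold rfpaProb
    rw [if_neg, if_neg, if_neg]
    · have hxc' : x / c = (1 + δ) / α := by
        rw [hx]; field_simp
      rw [hxc', Real.log_div (by positivity) (by positivity)]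
      field_simp
      ring
    · intro h; nlinarith
    · intro h; nlinarith
    · rintro ⟨h1, h2⟩; linarith
  have hp0pos : 0 < p0 := by rw [hp0val]; positivity
  have hp0x : p0 * x ≤ ε := by
    have hlogδ : Real.log (1 + δ) ≤ δ := by
      have := Real.log_le_sub_one_of_pos (show (0:ℝ) < 1 + δ by linarith)
      linarith
    have h1 : p0 * x ≤ δ / (2 * Real.log α) * c := by
      rw [hp0val]
      gcongr
    have h2 : δ * c ≤ 2 * ε * Real.log α := by
      rw [le_div_iff₀ hcpos] at hδ3
      nlinarith
    have h3 : δ / (2 * Real.log α) * c = δ * c / (2 * Real.log α) := by ring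
    have h4 : δ * c / (2 * Real.log α) ≤ 2 * ε * Real.log α / (2 * Real.log α) := by
      gcongr
    have h5 : 2 * ε * Real.log α / (2 * Real.log α) = ε := by
      field_simp
    linarith
  -- the deviation
  set b' : Fin q → ℝ := Function.update (b (i+1)) j x with hb'
  have hb'nn : ∀ k, 0 ≤ b' k := by
    intro k
    rw [hb']
    rcases eq_or_ne k j with h | h
    · rw [h, Function.update_self]; exact le_of_lt hxpos
    · rw [Function.update_of_ne h]; exact hbnn _ _
  set bu := Function.update b (i+1) b' with hbu
  have hbu1 : bu (i+1) = b' := Function.update_self _ _ _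
  have hbu2 : bu i = b i := Function.update_of_ne hne _ _
  -- general sum splitting lemma
  have hsum : ∀ (f g : Fin q → ℝ), (∀ k, k ≠ j → f k = g k) →
      ∑ k, f k = (∑ k, g k) + (f j - g j) := by
    intro f g h
    have h1 : ∑ k, (f k - g k) = f j - g j := by
      apply Finset.sum_eq_single_of_mem j (Finset.mem_univ j)
      intro k _ hk
      rw [h k hk]; ring
    rw [Finset.sum_sub_distrib] at h1
    linarith
  have hpik : ∀ k, k ≠ j → rfpaPi α bu (i+1) k = rfpaPi α b (i+1) k := by
    intro k hk
    show rfpaProb α (bu (i+1) k) (bu (i+1+1) k) = rfpaProb α (b (i+1) k) (b (i+1+1) k)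
    rw [hii, hbu1, hbu2, hb', Function.update_of_ne hk]
  have hpij : rfpaPi α bu (i+1) j = p0 := by
    show rfpaProb α (bu (i+1) j) (bu (i+1+1) j) = p0
    rw [hii, hbu1, hbu2, hb', Function.update_self]
  have hnewV : rfpaV α v bu (i+1) = rfpaV α v b (i+1) + p0 * w := by
    unfold rfpaV
    rw [hsum _ _ (fun k hk => by rw [hpik k hk]), hpij, hzero]
    ring
  have hnewS : rfpaSpendI α bu (i+1) = rfpaSpendI α b (i+1) + p0 * x := by
    unfold rfpaSpendI
    rw [hsum _ _ (fun k hk => by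
      rw [hpik k hk, hbu1, hb', Function.update_of_ne hk])]
    rw [hpij, hzero, hbu1, hb', Function.update_self]
    ring
  rcases hdev (i+1) b' hb'nn with hcase | hcase
  · rw [← hbu, hnewV] at hcase
    nlinarith
  · rw [← hbu, hnewV, hnewS] at hcase
    have hold : rfpaSpendI α b (i+1) ≤ rfpaV α v b (i+1) :=
      le_trans (hspend (i+1)) (min_le_right _ _)
    have hminle : min (B (i+1)) (rfpaV α v b (i+1) + p0 * w)
        ≥ rfpaSpendI α b (i+1) + p0 * x := by
      apply le_min
      · have : ε = B (i+1) - rfpaV α v b (i+1) := hε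
        linarith
      · nlinarith
    linarith
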